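/- arXiv:2605.30009 — 3 statements merged into one kernel-verified Lean document; each statement's English description precedes it below -/
import Mathlib

section
/- Let d ≥ 1 be an integer, let s > 0 be a real number, and let M ≥ 0 be an integer. Then there exists a constant C > 0 such that for every ξ ∈ ℝ^d one has |⟨ξ⟩^s − |ξ|^s − Σ_{j=1}^M (−1)^{j+1} C(s/2, j) ⟨ξ⟩^{s−2j}| ≤ C ⟨ξ⟩^{s−2(M+1)}, where an empty sum (M = 0) equals zero. -/
/-- The generalized binomial coefficient `C(α, j) = α(α−1)⋯(α−j+1)/j!`. -/
noncomputable def genBinom (α : ℝ) (j : ℕ) : ℝ :=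
  (∏ i ∈ Finset.range j, (α - (i : ℝ))) / (Nat.factorial j : ℝ)

lemma genBinom_zero (α : ℝ) : genBinom α 0 = 1 := by simp [genBinom]

lemma genBinom_succ (α : ℝ) (j : ℕ) :
    ((j : ℝ) + 1) * genBinom α (j + 1) = α * genBinom (α - 1) j := by
  have h : ∏ i ∈ Finset.range (j + 1), (α - (i : ℝ))
      = α * ∏ i ∈ Finset.range j, (α - 1 - (i : ℝ)) := by
    rw [Finset.prod_range_succ']
    simp only [Nat.cast_add, Nat.cast_one, Nat.cast_zero, sub_zero]
    rw [mul_comm]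
    congr 1
    apply Finset.prod_congr rfl
    intro i _
    ring
  have hf : (Nat.factorial (j + 1) : ℝ) = ((j : ℝ) + 1) * (Nat.factorial j : ℝ) := by
    rw [Nat.factorial_succ]; push_cast; ring
  have hj : ((j : ℝ) + 1) ≠ 0 := by positivity
  have hfj : (Nat.factorial j : ℝ) ≠ 0 := by
    exact_mod_cast Nat.factorial_ne_zero j
  unfold genBinom
  rw [hf, h]
  field_simp

noncomputable def Rfun (α : ℝ) (M : ℕ) (t : ℝ) : ℝ :=
  (1 - t) ^ α - ∑ j ∈ Finset.range (M + 1), genBinom α j * (-t) ^ j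

lemma Rfun_zero (α : ℝ) (M : ℕ) : Rfun α M 0 = 0 := by
  simp [Rfun, Finset.sum_range_succ']
  · simp [genBinom_zero]

lemma hasDerivAt_Rfun (α : ℝ) (N : ℕ) {t : ℝ} (ht : t < 1) :
    HasDerivAt (Rfun α (N + 1)) (-α * Rfun (α - 1) N t) t := by
  have h1 : HasDerivAt (fun u : ℝ => (1 - u) ^ α)
      (-(α * (1 - t) ^ (α - 1))) t := by
    have hb : HasDerivAt (fun u : ℝ => 1 - u) (-1) t := by
      simpa using (hasDerivAt_id t).const_sub 1
    have := (Real.hasDerivAt_rpow_const (p := α) (Or.inl (by linarith))).comp t hb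
    simpa [mul_comm, Function.comp_def] using this
  have h2 : ∀ j : ℕ, HasDerivAt (fun u : ℝ => (-u) ^ j)
      ((j : ℝ) * (-t) ^ (j - 1) * (-1)) t := by
    intro j
    exact (hasDerivAt_neg t).pow j
  have h3 : HasDerivAt (fun u : ℝ => ∑ j ∈ Finset.range (N + 2), genBinom α j * (-u) ^ j)
      (∑ j ∈ Finset.range (N + 2), genBinom α j * ((j : ℝ) * (-t) ^ (j - 1) * (-1))) t := by
    apply HasDerivAt.fun_sum
    intro j _
    exact (h2 j).const_mul _
  have hsum : ∑ j ∈ Finset.range (N + 2), genBinom α j * ((j : ℝ) * (-t) ^ (j - 1) * (-1))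
      = -α * ∑ j ∈ Finset.range (N + 1), genBinom (α - 1) j * (-t) ^ j := by
    rw [Finset.sum_range_succ']
    simp only [Nat.cast_zero, Nat.cast_add, Nat.cast_one]
    rw [Finset.mul_sum]
    simp only [zero_mul, mul_zero, add_zero]  -- kill f 0 term? check
    apply Finset.sum_congr rfl
    intro i _
    have := genBinom_succ α i
    have h : genBinom α (i + 1) * (((i : ℝ) + 1) * (-t) ^ (i + 1 - 1) * (-1))
        = -(((i:ℝ)+1) * genBinom α (i+1)) * (-t) ^ i := by
      simp; ring
    rw [h, this]
    ring
  have := h1.sub h3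
  have heq : -(α * (1 - t) ^ (α - 1)) -
      ∑ j ∈ Finset.range (N + 2), genBinom α j * ((j : ℝ) * (-t) ^ (j - 1) * (-1))
      = -α * Rfun (α - 1) N t := by
    rw [hsum, Rfun]
    ring
  rw [heq] at this
  exact this

lemma bound_of_deriv {f f' : ℝ → ℝ} {t K : ℝ} (ht0 : 0 ≤ t)
    (hd : ∀ u ∈ Set.Icc (0:ℝ) t, HasDerivAt f (f' u) u)
    (hb : ∀ u ∈ Set.Icc (0:ℝ) t, |f' u| ≤ K) (hf0 : f 0 = 0) : |f t| ≤ K * t := by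
  have := (convex_Icc (0:ℝ) t).norm_image_sub_le_of_norm_hasDerivWithin_le
    (f := f) (f' := f') (C := K)
    (fun u hu => (hd u hu).hasDerivWithinAt) hb
    (Set.left_mem_Icc.2 ht0) (Set.right_mem_Icc.2 ht0)
  simpa [hf0, Real.norm_eq_abs, abs_of_nonneg ht0] using this

lemma Rfun_bound_half (M : ℕ) : ∀ α : ℝ, ∃ C : ℝ, 0 < C ∧
    ∀ t ∈ Set.Icc (0 : ℝ) (1 / 2), |Rfun α M t| ≤ C * t ^ (M + 1) := by
  induction M with
  | zero =>
    intro α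
    refine ⟨|α| * ((1 / 2 : ℝ) ^ (α - 1) + 1) + 1, by positivity, ?_⟩
    rintro t ⟨ht0, ht2⟩
    have key := bound_of_deriv (f := Rfun α 0)
      (f' := fun u => -(α * (1 - u) ^ (α - 1))) (K := |α| * ((1 / 2 : ℝ) ^ (α - 1) + 1)) ht0 ?_ ?_ (Rfun_zero α 0)
    · calc |Rfun α 0 t| ≤ (|α| * ((1 / 2 : ℝ) ^ (α - 1) + 1)) * t := key
        _ ≤ (|α| * ((1 / 2 : ℝ) ^ (α - 1) + 1) + 1) * t ^ (0 + 1) := by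
            have : (0:ℝ) ≤ |α| * ((1 / 2 : ℝ) ^ (α - 1) + 1) := by positivity
            nlinarith
    · rintro u ⟨hu0, hut⟩
      have h1u : (0:ℝ) < 1 - u := by linarith
      have hb : HasDerivAt (fun v : ℝ => 1 - v) (-1) u := by
        simpa using (hasDerivAt_id u).const_sub 1
      have hcomp := (Real.hasDerivAt_rpow_const (p := α)
        (Or.inl (ne_of_gt h1u))).comp u hb
      have hsum : HasDerivAt (fun v : ℝ => ∑ j ∈ Finset.range 1, genBinom α j * (-v) ^ j)
          0 u := by
        simp only [Finset.range_one, Finset.sum_singleton, pow_zero, mul_one]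
        exact hasDerivAt_const u _
      have h5 := (hcomp.sub hsum)
      have hRe : Rfun α 0 = fun v => (1 - v) ^ α - ∑ j ∈ Finset.range 1, genBinom α j * (-v) ^ j := by
        funext v; rfl
      rw [hRe]
      simpa [mul_comm, Function.comp_def, Pi.sub_def] using h5
    · rintro u ⟨hu0, hut⟩
      have hu2 : u ≤ 1 / 2 := le_trans hut ht2
      have h1u : (1 : ℝ) / 2 ≤ 1 - u := by linarith
      have h1u' : (0 : ℝ) < 1 - u := by linarith
      have hle : (1 - u) ^ (α - 1) ≤ (1 / 2 : ℝ) ^ (α - 1) + 1 := by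
        rcases le_or_gt 0 (α - 1) with h | h
        · have h1 : (1 - u) ^ (α - 1) ≤ 1 ^ (α - 1) :=
            Real.rpow_le_rpow (le_of_lt h1u') (by linarith) h
          have h0 : (0:ℝ) ≤ (1 / 2 : ℝ) ^ (α - 1) := Real.rpow_nonneg (by norm_num) _
          simp at h1
          linarith
        · have h1 : (1 - u) ^ (α - 1) ≤ (1 / 2 : ℝ) ^ (α - 1) :=
            Real.rpow_le_rpow_of_nonpos (by norm_num) h1u (le_of_lt h)
          linarith
      have hpos : (0:ℝ) ≤ (1 - u) ^ (α - 1) := Real.rpow_nonneg (le_of_lt h1u') _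
      have : |-(α * (1 - u) ^ (α - 1))| = |α| * (1 - u) ^ (α - 1) := by
        rw [abs_neg, abs_mul, abs_of_nonneg hpos]
      rw [this]
      calc |α| * (1 - u) ^ (α - 1) ≤ |α| * ((1 / 2 : ℝ) ^ (α - 1) + 1) :=
            mul_le_mul_of_nonneg_left hle (abs_nonneg α)
        _ ≤ _ := by linarith
  | succ N ih =>
    intro α
    obtain ⟨C, hC, hbd⟩ := ih (α - 1)
    refine ⟨(|α| + 1) * C, by positivity, ?_⟩
    rintro t ⟨ht0, ht2⟩
    have key := bound_of_deriv (f := Rfun α (N + 1))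
      (f' := fun u => -α * Rfun (α - 1) N u) (K := (|α| + 1) * C * t ^ (N + 1)) ht0 ?_ ?_ (Rfun_zero α (N + 1))
    · calc |Rfun α (N + 1) t| ≤ ((|α| + 1) * C * t ^ (N + 1)) * t := key
        _ = (|α| + 1) * C * t ^ (N + 1 + 1) := by ring
    · rintro u ⟨hu0, hut⟩
      exact hasDerivAt_Rfun α N (by linarith)
    · rintro u ⟨hu0, hut⟩
      have hu : u ∈ Set.Icc (0:ℝ) (1/2) := ⟨hu0, by linarith⟩
      have h1 := hbd u hu
      have h2 : |(-α) * Rfun (α - 1) N u| = |α| * |Rfun (α - 1) N u| := by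
        rw [abs_mul, abs_neg]
      calc |(-α) * Rfun (α - 1) N u| = |α| * |Rfun (α - 1) N u| := h2
        _ ≤ |α| * (C * u ^ (N + 1)) := mul_le_mul_of_nonneg_left h1 (abs_nonneg α)
        _ ≤ (|α| + 1) * (C * t ^ (N + 1)) := by
            have hpow : u ^ (N + 1) ≤ t ^ (N + 1) := pow_le_pow_left₀ hu0 hut _
            have h3 : C * u ^ (N + 1) ≤ C * t ^ (N + 1) :=
              mul_le_mul_of_nonneg_left hpow (le_of_lt hC)
            have h4 : (0:ℝ) ≤ C * u ^ (N+1) := by positivity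
            nlinarith [abs_nonneg α]
        _ = (|α| + 1) * C * t ^ (N + 1) := by ring

lemma Rfun_bound (α : ℝ) (hα : 0 < α) (M : ℕ) : ∃ C : ℝ, 0 < C ∧
    ∀ t ∈ Set.Ioc (0 : ℝ) 1, |Rfun α M t| ≤ C * t ^ (M + 1) := by
  obtain ⟨C₁, hC₁, h₁⟩ := Rfun_bound_half M α
  set B : ℝ := 1 + ∑ j ∈ Finset.range (M + 1), |genBinom α j| with hB
  have hB0 : 0 < B := by
    have : (0:ℝ) ≤ ∑ j ∈ Finset.range (M + 1), |genBinom α j| :=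
      Finset.sum_nonneg fun j _ => abs_nonneg _
    rw [hB]; linarith
  refine ⟨C₁ + B * 2 ^ (M + 1), by positivity, ?_⟩
  rintro t ⟨ht0, ht1⟩
  rcases le_or_gt t (1 / 2) with h | h
  · have := h₁ t ⟨le_of_lt ht0, h⟩
    have hp : (0:ℝ) ≤ t ^ (M + 1) := by positivity
    nlinarith [mul_pos hB0 (pow_pos (by norm_num : (0:ℝ) < 2) (M + 1))]
  · -- t ∈ (1/2, 1]
    have hRb : |Rfun α M t| ≤ B := by
      have h1t : (0:ℝ) ≤ 1 - t := by linarith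
      have hle1 : (1 - t) ^ α ≤ 1 := Real.rpow_le_one h1t (by linarith) (le_of_lt hα)
      have hge0 : (0:ℝ) ≤ (1 - t) ^ α := Real.rpow_nonneg h1t _
      have hsum : |∑ j ∈ Finset.range (M + 1), genBinom α j * (-t) ^ j|
          ≤ ∑ j ∈ Finset.range (M + 1), |genBinom α j| := by
        calc |∑ j ∈ Finset.range (M + 1), genBinom α j * (-t) ^ j|
            ≤ ∑ j ∈ Finset.range (M + 1), |genBinom α j * (-t) ^ j| :=
              Finset.abs_sum_le_sum_abs _ _
          _ ≤ ∑ j ∈ Finset.range (M + 1), |genBinom α j| := by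
              apply Finset.sum_le_sum
              intro j _
              rw [abs_mul]
              have : |(-t) ^ j| ≤ 1 := by
                rw [abs_pow, abs_neg, abs_of_pos ht0]
                exact pow_le_one₀ (le_of_lt ht0) ht1
              nlinarith [abs_nonneg (genBinom α j)]
      rw [Rfun, hB]
      have := abs_sub_abs_le_abs_sub ((1 - t) ^ α) (∑ j ∈ Finset.range (M + 1), genBinom α j * (-t) ^ j)
      have habs : |(1 - t) ^ α| ≤ 1 := by rw [abs_of_nonneg hge0]; exact hle1
      calc |(1 - t) ^ α - ∑ j ∈ Finset.range (M + 1), genBinom α j * (-t) ^ j|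
          ≤ |(1 - t) ^ α| + |∑ j ∈ Finset.range (M + 1), genBinom α j * (-t) ^ j| :=
            abs_sub _ _
        _ ≤ 1 + ∑ j ∈ Finset.range (M + 1), |genBinom α j| := by linarith
    have hpow : (1 / 2 : ℝ) ^ (M + 1) ≤ t ^ (M + 1) :=
      pow_le_pow_left₀ (by norm_num) (le_of_lt h) _
    have h2 : B ≤ B * 2 ^ (M + 1) * t ^ (M + 1) := by
      have h2' : B * 2 ^ (M+1) * (1/2:ℝ)^(M+1) ≤ B * 2^(M+1) * t^(M+1) := by
        apply mul_le_mul_of_nonneg_left hpow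
        positivity
      calc B = B * 2^(M+1) * (1/2:ℝ)^(M+1) := by
            rw [mul_assoc, ← mul_pow]; norm_num
        _ ≤ _ := h2'
    have hp : (0:ℝ) ≤ t ^ (M + 1) := by positivity
    calc |Rfun α M t| ≤ B := hRb
      _ ≤ B * 2 ^ (M + 1) * t ^ (M + 1) := h2
      _ ≤ (C₁ + B * 2 ^ (M + 1)) * t ^ (M + 1) := by nlinarith


/-- The Japanese bracket `⟨ξ⟩ = (1 + |ξ|²)^{1/2}`. -/
noncomputable def jbracket {d : ℕ} (ξ : EuclideanSpace ℝ (Fin d)) : ℝ :=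
  Real.sqrt (1 + ‖ξ‖ ^ 2)

/-- For `d ≥ 1`, `s > 0` and an integer `M ≥ 0`, there exists `C > 0` such that for every
`ξ ∈ ℝ^d`,
`|⟨ξ⟩^s − |ξ|^s − Σ_{j=1}^M (−1)^{j+1} C(s/2, j) ⟨ξ⟩^{s−2j}| ≤ C ⟨ξ⟩^{s−2(M+1)}`. -/
theorem symbol_remainder_estimate (d : ℕ) (hd : 1 ≤ d) (s : ℝ) (hs : 0 < s) (M : ℕ) :
    ∃ C : ℝ, 0 < C ∧ ∀ ξ : EuclideanSpace ℝ (Fin d),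
      |jbracket ξ ^ s - ‖ξ‖ ^ s -
          ∑ j ∈ Finset.Icc 1 M,
            (-1 : ℝ) ^ (j + 1) * genBinom (s / 2) j * jbracket ξ ^ (s - 2 * (j : ℝ))| ≤
        C * jbracket ξ ^ (s - 2 * ((M : ℝ) + 1)) := by
  set α : ℝ := s / 2 with hα
  have hα0 : 0 < α := by positivity
  obtain ⟨C, hC, hbd⟩ := Rfun_bound α hα0 M
  refine ⟨C, hC, ?_⟩
  intro ξ
  set u : ℝ := 1 + ‖ξ‖ ^ 2 with hu
  have hu1 : (1:ℝ) ≤ u := by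
    have : (0:ℝ) ≤ ‖ξ‖ ^ 2 := by positivity
    rw [hu]; linarith
  have hu0 : (0:ℝ) < u := by linarith
  set t : ℝ := u⁻¹ with htdef
  have ht : t ∈ Set.Ioc (0:ℝ) 1 := by
    constructor
    · exact inv_pos.2 hu0
    · rw [htdef]
      exact inv_le_one_of_one_le₀ hu1
  have ht0 : 0 < t := ht.1
  have ht1 : t ≤ 1 := ht.2
  -- jbracket powers
  have hjb : ∀ a : ℝ, jbracket ξ ^ a = u ^ (a / 2) := by
    intro a
    rw [jbracket, ← hu, Real.sqrt_eq_rpow, ← Real.rpow_mul (le_of_lt hu0)]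
    congr 1
    ring
  have hjpow : ∀ j : ℕ, jbracket ξ ^ (s - 2 * (j : ℝ)) = u ^ α * t ^ j := by
    intro j
    rw [hjb]
    have he : (s - 2 * (j : ℝ)) / 2 = α + (-(j : ℝ)) := by rw [hα]; ring
    rw [he, Real.rpow_add hu0, Real.rpow_neg (le_of_lt hu0), Real.rpow_natCast,
      ← inv_pow, ← htdef]
  have hjs : jbracket ξ ^ s = u ^ α := by
    have := hjpow 0
    simpa using this
  have hjfin : jbracket ξ ^ (s - 2 * ((M : ℝ) + 1)) = u ^ α * t ^ (M + 1) := by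
    have := hjpow (M + 1)
    rw [← this]
    norm_num
  have hnorm : ‖ξ‖ ^ s = u ^ α * (1 - t) ^ α := by
    have hx2 : ‖ξ‖ ^ 2 = u * (1 - t) := by
      rw [htdef]
      field_simp
      rw [hu]; ring
    have h1t : (0:ℝ) ≤ 1 - t := by linarith
    have hxs : ‖ξ‖ ^ s = (‖ξ‖ ^ 2 : ℝ) ^ α := by
      rw [← Real.rpow_natCast ‖ξ‖ 2, ← Real.rpow_mul (norm_nonneg _)]
      congr 1
      rw [hα]
      push_cast
      ring
    rw [hxs, hx2, Real.mul_rpow (le_of_lt hu0) h1t]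
  have hupos : (0:ℝ) ≤ u ^ α := Real.rpow_nonneg (le_of_lt hu0) _
  -- key algebraic identity
  have key : jbracket ξ ^ s - ‖ξ‖ ^ s -
      ∑ j ∈ Finset.Icc 1 M,
        (-1 : ℝ) ^ (j + 1) * genBinom α j * jbracket ξ ^ (s - 2 * (j : ℝ))
      = -(u ^ α * Rfun α M t) := by
    rw [hjs, hnorm, Rfun, Finset.sum_range_succ']
    have hIcc : ∑ j ∈ Finset.Icc 1 M,
        (-1 : ℝ) ^ (j + 1) * genBinom α j * jbracket ξ ^ (s - 2 * (j : ℝ))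
        = ∑ i ∈ Finset.range M,
          (-1 : ℝ) ^ (1 + i + 1) * genBinom α (1 + i) * (u ^ α * t ^ (1 + i)) := by
      rw [← Finset.Ico_add_one_right_eq_Icc, Finset.sum_Ico_eq_sum_range]
      apply Finset.sum_congr (by norm_num)
      intro i _
      rw [hjpow]
    rw [hIcc]
    simp only [pow_zero, mul_one, genBinom_zero]
    rw [mul_sub, mul_add, Finset.mul_sum]
    have hterm : ∀ i ∈ Finset.range M,
        (-1 : ℝ) ^ (1 + i + 1) * genBinom α (1 + i) * (u ^ α * t ^ (1 + i))
        = -(u ^ α * (genBinom α (i + 1) * (-t) ^ (i + 1))) := by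
      intro i _
      rw [add_comm 1 i, neg_pow]
      ring
    rw [Finset.sum_congr rfl hterm, Finset.sum_neg_distrib]
    ring
  rw [key, hjfin, abs_neg, abs_mul, abs_of_nonneg hupos]
  have := hbd t ht
  calc u ^ α * |Rfun α M t| ≤ u ^ α * (C * t ^ (M + 1)) :=
        mul_le_mul_of_nonneg_left this hupos
    _ = C * (u ^ α * t ^ (M + 1)) := by ring
end

section
/- Let d ≥ 1 be an integer and let s > 0 be a real number. There exists a constant C > 0 such that for every measurable function g : ℝ^d → ℂ for which the function ξ ↦ ⟨ξ⟩^{s−2} g(ξ) belongs to L²(ℝ^d), the function ξ ↦ (⟨ξ⟩^s − |ξ|^s) g(ξ) also belongs to L²(ℝ^d) and ‖ξ ↦ (⟨ξ⟩^s − |ξ|^s) g(ξ)‖_{L²(ℝ^d)} ≤ C ‖ξ ↦ ⟨ξ⟩^{s−2} g(ξ)‖_{L²(ℝ^d)}. -/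
open MeasureTheory

lemma jbracket_one_le {d : ℕ} (ξ : EuclideanSpace ℝ (Fin d)) : 1 ≤ jbracket ξ := by
  rw [jbracket]
  calc (1:ℝ) = Real.sqrt 1 := by simp
    _ ≤ Real.sqrt (1 + ‖ξ‖ ^ 2) := Real.sqrt_le_sqrt (le_add_of_nonneg_right (sq_nonneg ‖ξ‖))

lemma jbracket_sq {d : ℕ} (ξ : EuclideanSpace ℝ (Fin d)) :
    jbracket ξ ^ 2 = 1 + ‖ξ‖ ^ 2 := Real.sq_sqrt (by positivity)

/-- Geometric sum bound: for `1 ≤ r ≤ 2`, `r^s - 1 ≤ n·2^n·(r² - 1)` with `n = ⌈s⌉`. -/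
lemma rpow_sub_one_le (s : ℝ) (hs : 0 < s) (r : ℝ) (hr1 : 1 ≤ r) (hr2 : r ≤ 2) :
    r ^ s - 1 ≤ (Nat.ceil s : ℝ) * 2 ^ (Nat.ceil s) * (r ^ 2 - 1) := by
  set n := Nat.ceil s with hn
  have hr0 : (0:ℝ) < r := lt_of_lt_of_le one_pos hr1
  have h1 : r ^ s ≤ r ^ (n : ℝ) :=
    Real.rpow_le_rpow_of_exponent_le hr1 (Nat.le_ceil s)
  have h2 : r ^ (n : ℝ) = r ^ n := Real.rpow_natCast r n
  have hgeom : r ^ n - 1 = (∑ i ∈ Finset.range n, r ^ i) * (r - 1) := (geom_sum_mul r n).symm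
  have hsum : (∑ i ∈ Finset.range n, r ^ i) ≤ (n : ℝ) * 2 ^ n := by
    calc (∑ i ∈ Finset.range n, r ^ i) ≤ ∑ i ∈ Finset.range n, (2:ℝ) ^ n := by
          refine Finset.sum_le_sum fun i hi => ?_
          calc r ^ i ≤ 2 ^ i := pow_le_pow_left₀ (by linarith) hr2 i
            _ ≤ 2 ^ n := pow_le_pow_right₀ (by norm_num) (Finset.mem_range.mp hi).le
      _ = (n : ℝ) * 2 ^ n := by simp [mul_comm]
  have hrm1 : r - 1 ≤ r ^ 2 - 1 := by nlinarith
  have hsq : (0:ℝ) ≤ r ^ 2 - 1 := by nlinarith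
  have hr1' : (0:ℝ) ≤ r - 1 := by linarith
  calc r ^ s - 1 ≤ r ^ n - 1 := by rw [← h2]; linarith
    _ = (∑ i ∈ Finset.range n, r ^ i) * (r - 1) := hgeom
    _ ≤ ((n : ℝ) * 2 ^ n) * (r ^ 2 - 1) :=
        mul_le_mul hsum hrm1 hr1' (by positivity)

set_option maxHeartbeats 1000000 in
/-- Pointwise bound: `0 ≤ ⟨ξ⟩^s − ‖ξ‖^s ≤ C ⟨ξ⟩^{s-2}`. -/
lemma pointwise_bound {d : ℕ} (s : ℝ) (hs : 0 < s) (ξ : EuclideanSpace ℝ (Fin d)) :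
    0 ≤ jbracket ξ ^ s - ‖ξ‖ ^ s ∧
    jbracket ξ ^ s - ‖ξ‖ ^ s ≤
      (2 * ((Nat.ceil s : ℝ) * 2 ^ (Nat.ceil s)) + 2) * jbracket ξ ^ (s - 2) := by
  set b := jbracket ξ with hb
  set t := ‖ξ‖ with ht
  have ht0 : 0 ≤ t := norm_nonneg ξ
  have hb1 : 1 ≤ b := jbracket_one_le ξ
  have hb0 : 0 < b := lt_of_lt_of_le one_pos hb1
  have hbsq : b ^ 2 = 1 + t ^ 2 := jbracket_sq ξ
  have htb : t ≤ b := by nlinarith [Real.sq_sqrt (show (0:ℝ) ≤ 1 + t^2 by positivity)]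
  have hts : t ^ s ≤ b ^ s := Real.rpow_le_rpow ht0 htb hs.le
  set K : ℝ := (Nat.ceil s : ℝ) * 2 ^ (Nat.ceil s) with hK
  have hK0 : 0 < K := by
    have : 1 ≤ Nat.ceil s := Nat.one_le_ceil_iff.mpr hs
    have : (1:ℝ) ≤ (Nat.ceil s : ℝ) := by exact_mod_cast this
    positivity
  refine ⟨by linarith, ?_⟩
  have hbs2 : 0 < b ^ (s - 2) := Real.rpow_pos_of_pos hb0 _
  have hbs_split : b ^ s = b ^ 2 * b ^ (s - 2) := by
    rw [← Real.rpow_natCast b 2, ← Real.rpow_add hb0]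
    norm_num
  rcases le_or_gt t 1 with hcase | hcase
  · -- small frequencies: b² ≤ 2
    have hb2 : b ^ 2 ≤ 2 := by nlinarith
    have : b ^ s ≤ 2 * b ^ (s - 2) := by
      rw [hbs_split]
      exact mul_le_mul_of_nonneg_right hb2 hbs2.le
    have hts0 : 0 ≤ t ^ s := Real.rpow_nonneg ht0 s
    nlinarith
  · -- large frequencies: t ≥ 1
    have ht1 : (1:ℝ) ≤ t := hcase.le
    have ht0' : (0:ℝ) < t := lt_of_lt_of_le one_pos ht1
    set r := b / t with hr
    have hr1 : 1 ≤ r := (one_le_div ht0').mpr htb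
    have hrsq : r ^ 2 = 1 + 1 / t ^ 2 := by
      field_simp [hr]
      rw [hr, div_pow, div_mul_cancel₀ _ (by positivity)]; linarith
    have hinv1 : 1 / t ^ 2 ≤ 1 := by
      rw [div_le_one (by positivity)]; nlinarith
    have hrsq2 : r ^ 2 ≤ 2 := by rw [hrsq]; linarith
    have hr2 : r ≤ 2 := by nlinarith
    have hmain := rpow_sub_one_le s hs r hr1 hr2
    have hbrt : b ^ s = r ^ s * t ^ s := by
      rw [hr, ← Real.mul_rpow (by positivity) ht0]
      field_simp
    have hrsq1 : r ^ 2 - 1 = 1 / t ^ 2 := by rw [hrsq]; ring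
    have hts_pos : 0 < t ^ s := Real.rpow_pos_of_pos ht0' s
    have h1 : b ^ s - t ^ s = t ^ s * (r ^ s - 1) := by rw [hbrt]; ring
    have hmain' : r ^ s - 1 ≤ K * (1 / t ^ 2) := by rw [← hrsq1, hK]; exact hmain
    have h2 : b ^ s - t ^ s ≤ K * (t ^ s / t ^ 2) := by
      rw [h1]
      calc t ^ s * (r ^ s - 1) ≤ t ^ s * (K * (1 / t ^ 2)) :=
            mul_le_mul_of_nonneg_left hmain' hts_pos.le
        _ = K * (t ^ s / t ^ 2) := by ring
    -- t^s / t² ≤ 2 b^{s-2}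
    have h3 : t ^ s / t ^ 2 ≤ 2 * b ^ (s - 2) := by
      have hb2t : b ^ 2 ≤ 2 * t ^ 2 := by nlinarith
      have hinv : 1 / t ^ 2 ≤ 2 / b ^ 2 := by
        rw [div_le_div_iff₀ (by positivity) (by positivity)]
        nlinarith
      have : t ^ s / t ^ 2 ≤ b ^ s * (2 / b ^ 2) := by
        calc t ^ s / t ^ 2 = t ^ s * (1 / t ^ 2) := by ring
          _ ≤ b ^ s * (2 / b ^ 2) :=
            mul_le_mul hts hinv (by positivity) (Real.rpow_nonneg hb0.le s)
      calc t ^ s / t ^ 2 ≤ b ^ s * (2 / b ^ 2) := this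
        _ = 2 * (b ^ s / b ^ 2) := by ring
        _ = 2 * b ^ (s - 2) := by rw [hbs_split]; field_simp
    have hfin : b ^ s - t ^ s ≤ K * (2 * b ^ (s - 2)) :=
      h2.trans (mul_le_mul_of_nonneg_left h3 hK0.le)
    nlinarith

set_option maxHeartbeats 1000000 in
/-- For `d ≥ 1` and `s > 0` there exists `C > 0` such that for every measurable
`g : ℝ^d → ℂ` with `ξ ↦ ⟨ξ⟩^{s−2} g(ξ) ∈ L²`, the function `ξ ↦ (⟨ξ⟩^s − |ξ|^s) g(ξ)`
is in `L²` with `‖(⟨·⟩^s − |·|^s) g‖_{L²} ≤ C ‖⟨·⟩^{s−2} g‖_{L²}`. -/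
theorem multiplier_L2_bound (d : ℕ) (hd : 1 ≤ d) (s : ℝ) (hs : 0 < s) :
    ∃ C : ℝ, 0 < C ∧ ∀ g : EuclideanSpace ℝ (Fin d) → ℂ, Measurable g →
      MemLp (fun ξ => (jbracket ξ ^ (s - 2)) • g ξ) 2 volume →
      (MemLp (fun ξ => (jbracket ξ ^ s - ‖ξ‖ ^ s) • g ξ) 2 volume ∧
        eLpNorm (fun ξ => (jbracket ξ ^ s - ‖ξ‖ ^ s) • g ξ) 2 volume ≤
          ENNReal.ofReal C *
            eLpNorm (fun ξ => (jbracket ξ ^ (s - 2)) • g ξ) 2 volume) := by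
  set C : ℝ := 2 * ((Nat.ceil s : ℝ) * 2 ^ (Nat.ceil s)) + 2 with hC
  have hC0 : 0 < C := by positivity
  refine ⟨C, hC0, fun g hg hmem => ?_⟩
  -- the pointwise domination
  have hdom : ∀ ξ : EuclideanSpace ℝ (Fin d),
      ‖(jbracket ξ ^ s - ‖ξ‖ ^ s) • g ξ‖ ≤ C * ‖(jbracket ξ ^ (s - 2)) • g ξ‖ := by
    intro ξ
    obtain ⟨h0, h1⟩ := pointwise_bound s hs ξ
    have hb0 : 0 < jbracket ξ := lt_of_lt_of_le one_pos (jbracket_one_le ξ)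
    have hbs2 : 0 < jbracket ξ ^ (s - 2) := Real.rpow_pos_of_pos hb0 _
    rw [norm_smul, norm_smul, Real.norm_eq_abs, Real.norm_eq_abs,
      abs_of_nonneg h0, abs_of_pos hbs2, ← mul_assoc]
    exact mul_le_mul_of_nonneg_right h1 (norm_nonneg _)
  -- measurability
  have hmeas : AEStronglyMeasurable
      (fun ξ : EuclideanSpace ℝ (Fin d) => (jbracket ξ ^ s - ‖ξ‖ ^ s) • g ξ) volume := by
    have hcont : Continuous (fun ξ : EuclideanSpace ℝ (Fin d) =>
        jbracket ξ ^ s - ‖ξ‖ ^ s) := by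
      apply Continuous.sub
      · apply Continuous.rpow_const
        · exact (continuous_const.add ((continuous_norm).pow 2)).sqrt
        · intro ξ
          left
          exact ne_of_gt (lt_of_lt_of_le one_pos (jbracket_one_le ξ))
      · exact continuous_norm.rpow_const fun ξ => Or.inr hs.le
    exact (hcont.measurable.smul hg).aestronglyMeasurable
  have hmem' := hmem.of_le_mul hmeas (Filter.Eventually.of_forall hdom)
  exact ⟨hmem', eLpNorm_le_mul_eLpNorm_of_ae_le_mul (Filter.Eventually.of_forall hdom) 2⟩
end

section
/- Let d ≥ 1 be an integer and s > 0 a real number. There exists a constant C > 0 such that for every Schwartz function f : ℝ^d → ℂ, the L² norm of the function ξ ↦ (⟨ξ⟩^s − |ξ|^s) · (𝓕f)(ξ) is at most C times the L² norm of the function ξ ↦ ⟨ξ⟩^{s−2} · (𝓕f)(ξ), where 𝓕f denotes the Fourier transform of f. Equivalently, ‖(J^s − |D|^s) f‖_{L²(ℝ^d)} ≤ C ‖f‖_{H^{s−2}(ℝ^d)} for all Schwartz f, where J^s f = 𝓕^{-1}(⟨ξ⟩^s 𝓕f), |D|^s f = 𝓕^{-1}(|ξ|^s 𝓕f), and ‖f‖_{H^{s−2}}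 = ‖ξ ↦ ⟨ξ⟩^{s−2}(𝓕f)(ξ)‖_{L²}. -/
open MeasureTheory FourierTransform

lemma one_sub_rpow_le_aux (t s : ℝ) (ht0 : 0 ≤ t) (ht1 : t ≤ 1) (hs : 0 < s) :
    1 - t ^ s ≤ max s 1 * (1 - t) := by
  have hm1 : (1 : ℝ) ≤ max s 1 := le_max_right _ _
  rcases le_or_gt s 1 with h | h
  · rcases eq_or_lt_of_le ht0 with h0 | h0
    · rw [← h0, Real.zero_rpow hs.ne']
      nlinarith
    · have h1 : t ^ (1 : ℝ) ≤ t ^ s := Real.rpow_le_rpow_of_exponent_ge h0 ht1 h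
      rw [Real.rpow_one] at h1
      nlinarith
  · have hb : 1 + s * (t - 1) ≤ (1 + (t - 1)) ^ s :=
      one_add_mul_self_le_rpow_one_add (by linarith) h.le
    have ht : (1 : ℝ) + (t - 1) = t := by ring
    rw [ht] at hb
    have hm : s ≤ max s 1 := le_max_left _ _
    nlinarith

lemma jbracket_key {d : ℕ} (s : ℝ) (hs : 0 < s) (ξ : EuclideanSpace ℝ (Fin d)) :
    |jbracket ξ ^ s - ‖ξ‖ ^ s| ≤ max s 1 * jbracket ξ ^ (s - 2) := by
  set a := ‖ξ‖ with ha
  have ha0 : 0 ≤ a := norm_nonneg _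
  have hb2 : jbracket ξ ^ 2 = 1 + a ^ 2 := Real.sq_sqrt (by positivity)
  set b := jbracket ξ with hbdef
  have hb1 : 1 ≤ b := by
    have hnn : 0 ≤ b := Real.sqrt_nonneg _
    nlinarith
  have hb0 : 0 < b := lt_of_lt_of_le one_pos hb1
  have hab : a ≤ b := by nlinarith
  have hpow : a ^ s ≤ b ^ s := Real.rpow_le_rpow ha0 hab hs.le
  rw [abs_of_nonneg (by linarith)]
  -- t = a / b
  have ht1 : a / b ≤ 1 := (div_le_one hb0).mpr hab
  have ht0 : 0 ≤ a / b := by positivity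
  have h1 := one_sub_rpow_le_aux (a / b) s ht0 ht1 hs
  have hdiv : (a / b) ^ s = a ^ s / b ^ s := Real.div_rpow ha0 hb0.le s
  have h2 : 1 - a / b ≤ 1 / b ^ 2 := by
    rw [show (1:ℝ) - a / b = (b - a) / b from by field_simp,
      div_le_div_iff₀ hb0 (by positivity)]
    nlinarith
  have hbs : 0 < b ^ s := Real.rpow_pos_of_pos hb0 s
  have h3 : b ^ s - a ^ s ≤ max s 1 * (b ^ s / b ^ 2) := by
    have := mul_le_mul_of_nonneg_left h1 hbs.le
    rw [hdiv] at this
    have heq : b ^ s * (1 - a ^ s / b ^ s) = b ^ s - a ^ s := by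
      field_simp
    rw [heq] at this
    calc b ^ s - a ^ s ≤ b ^ s * (max s 1 * (1 - a / b)) := this
      _ ≤ b ^ s * (max s 1 * (1 / b ^ 2)) := by
          apply mul_le_mul_of_nonneg_left _ hbs.le
          apply mul_le_mul_of_nonneg_left h2 (by positivity)
      _ = max s 1 * (b ^ s / b ^ 2) := by ring
  have h4 : b ^ (s - 2) = b ^ s / b ^ 2 := by
    rw [Real.rpow_sub hb0, ← Real.rpow_natCast b 2]
    norm_num
  rw [h4]
  exact h3

/-- For `d ≥ 1` and `s > 0` there exists `C > 0` such that for every Schwartz function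
`f : ℝ^d → ℂ`, the `L²` norm of `ξ ↦ (⟨ξ⟩^s − |ξ|^s)·(𝓕f)(ξ)` is at most `C` times the
`L²` norm of `ξ ↦ ⟨ξ⟩^{s−2}·(𝓕f)(ξ)`, i.e. `‖(J^s − |D|^s) f‖_{L²} ≤ C ‖f‖_{H^{s−2}}`. -/
theorem Js_sub_Ds_schwartz_bound (d : ℕ) (hd : 1 ≤ d) (s : ℝ) (hs : 0 < s) :
    ∃ C : ℝ, 0 < C ∧ ∀ f : SchwartzMap (EuclideanSpace ℝ (Fin d)) ℂ,
      eLpNorm (fun ξ => (jbracket ξ ^ s - ‖ξ‖ ^ s) • 𝓕 (⇑f) ξ)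
          2 volume ≤
        ENNReal.ofReal C *
          eLpNorm (fun ξ => (jbracket ξ ^ (s - 2)) • 𝓕 (⇑f) ξ)
            2 volume := by
  refine ⟨max s 1, lt_of_lt_of_le one_pos (le_max_right _ _), fun f => ?_⟩
  have hC0 : 0 ≤ max s 1 := le_trans zero_le_one (le_max_right _ _)
  have key : ∀ ξ : EuclideanSpace ℝ (Fin d),
      ‖(jbracket ξ ^ s - ‖ξ‖ ^ s) • 𝓕 (⇑f) ξ‖₊ ≤
        (max s 1).toNNReal * ‖(jbracket ξ ^ (s - 2)) • 𝓕 (⇑f) ξ‖₊ := by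
    intro ξ
    have hb0 : 0 < jbracket ξ := Real.sqrt_pos.mpr (by positivity)
    have hb : 0 < jbracket ξ ^ (s - 2) := Real.rpow_pos_of_pos hb0 _
    rw [← NNReal.coe_le_coe]
    push_cast
    rw [norm_smul, norm_smul]
    simp only [Real.norm_eq_abs, abs_of_pos hb]
    calc |jbracket ξ ^ s - ‖ξ‖ ^ s| * ‖𝓕 (⇑f) ξ‖
        ≤ (max s 1 * jbracket ξ ^ (s - 2)) * ‖𝓕 (⇑f) ξ‖ := by
          apply mul_le_mul_of_nonneg_right (jbracket_key s hs ξ) (norm_nonneg _)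
      _ = (max s 1).toNNReal * (jbracket ξ ^ (s - 2) * ‖𝓕 (⇑f) ξ‖) := by
          rw [Real.coe_toNNReal _ hC0]; ring
  have := eLpNorm_le_nnreal_smul_eLpNorm_of_ae_le_mul
    (f := fun ξ => (jbracket ξ ^ s - ‖ξ‖ ^ s) • 𝓕 (⇑f) ξ)
    (g := fun ξ => (jbracket ξ ^ (s - 2)) • 𝓕 (⇑f) ξ)
    (μ := volume) (c := (max s 1).toNNReal)
    (Filter.Eventually.of_forall key) 2
  rwa [ENNReal.smul_def, smul_eq_mul,
    show ((max s 1).toNNReal : ENNReal) = ENNReal.ofReal (max s 1) from rfl] at this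
end
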